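/- Let Φ be a field of prime characteristic p, W the free Φ-vector space on Φ^ℕ, δ_j and x_j = δ_j - 1 as above. For a finite set S ⊆ ℕ, let f_S ∈ Φ^ℕ be the indicator function of S (value 1 on S, 0 elsewhere). Then for every m ≥ 1, e_{f_∅} x₁ x₂ ⋯ x_m = Σ_{S ⊆ {1,...,m}} (-1)^{m - |S|} e_{f_S}, and in particular this element of W is nonzero. -/

import Mathlib

/-- The free `Φ`-vector space on the set `Φ^ℕ` of functions `ℕ → Φ`. -/
abbrev W (Φ : Type*) [Field Φ] : Type _ := (ℕ → Φ) →₀ Φ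

/-- The shift on indexing functions: increments the value at `m` by `1`. -/
def shift (Φ : Type*) [Field Φ] (m : ℕ) : (ℕ → Φ) → (ℕ → Φ) :=
  fun f => Function.update f m (f m + 1)

/-- The endomorphism `δ_m` of `W`. -/
noncomputable def delta (Φ : Type*) [Field Φ] (m : ℕ) : Module.End Φ (W Φ) :=
  Finsupp.lmapDomain Φ Φ (shift Φ m)

/-- The indicator function `f_S : ℕ → Φ` of a finite set `S ⊆ ℕ`. -/
def indicator (Φ : Type*) [Field Φ] (S : Finset ℕ) : ℕ → Φ :=
  fun i => if i ∈ S then 1 else 0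

lemma indicator_injective (Φ : Type*) [Field Φ] :
    Function.Injective (indicator Φ) := by
  intro S T h
  ext i
  have := congrFun h i
  simp only [indicator] at this
  by_cases hS : i ∈ S <;> by_cases hT : i ∈ T <;> simp_all

lemma shift_indicator (Φ : Type*) [Field Φ] (j : ℕ) (S : Finset ℕ) (hj : j ∉ S) :
    shift Φ j (indicator Φ S) = indicator Φ (insert j S) := by
  funext i
  simp only [shift, indicator, Function.update]
  by_cases h : i = j
  · subst h; simp [hj]
  · simp [h, Finset.mem_insert, h]

lemma delta_single (Φ : Type*) [Field Φ] (j : ℕ) (f : ℕ → Φ) (c : Φ) :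
    delta Φ j (Finsupp.single f c) = Finsupp.single (shift Φ j f) c := by
  simp [delta, Finsupp.lmapDomain, Finsupp.mapDomain_single]

lemma fold_eq (Φ : Type*) [Field Φ] (m : ℕ) :
    (List.range' 1 m).foldl (fun w j => (delta Φ j - 1) w)
        (Finsupp.single (indicator Φ ∅) (1 : Φ)) =
      ∑ S ∈ (Finset.Icc 1 m).powerset,
        (-1 : Φ) ^ (m - S.card) • Finsupp.single (indicator Φ S) (1 : Φ) := by
  induction m with
  | zero => simp
  | succ m ih =>
    have hrange : List.range' 1 (m + 1) = List.range' 1 m ++ [1 + m] := by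
      simpa using List.range'_concat (step := 1) (s := 1) (n := m)
    rw [hrange, List.foldl_append, List.foldl_cons, List.foldl_nil, ih]
    have hIcc : Finset.Icc 1 (m + 1) = insert (m + 1) (Finset.Icc 1 m) := by
      ext x; simp [Finset.mem_Icc, Finset.mem_insert]; omega
    have hnotmem : m + 1 ∉ Finset.Icc 1 m := by simp
    rw [hIcc, Finset.sum_powerset_insert hnotmem]
    have key : ∀ S ∈ (Finset.Icc 1 m).powerset,
        (delta Φ (1 + m) - 1)
          ((-1 : Φ) ^ (m - S.card) • Finsupp.single (indicator Φ S) (1 : Φ)) =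
        (-1 : Φ) ^ (m + 1 - (insert (m + 1) S).card) •
            Finsupp.single (indicator Φ (insert (m + 1) S)) (1 : Φ) +
        (-1 : Φ) ^ (m + 1 - S.card) • Finsupp.single (indicator Φ S) (1 : Φ) := by
      intro S hS
      rw [Finset.mem_powerset] at hS
      have hmem : m + 1 ∉ S := by
        intro h
        have := (Finset.mem_Icc.mp (hS h)).2
        omega
      have hcard : S.card ≤ m := le_trans (Finset.card_le_card hS) (by simp)
      have h1m : 1 + m = m + 1 := by omega
      rw [LinearMap.sub_apply, map_smul, delta_single, h1m, shift_indicator Φ (m+1) S hmem,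
        Finset.card_insert_of_notMem hmem]
      have e1 : m + 1 - (S.card + 1) = m - S.card := by omega
      have e2 : (-1 : Φ) ^ (m + 1 - S.card) = -((-1 : Φ) ^ (m - S.card)) := by
        have : m + 1 - S.card = (m - S.card) + 1 := by omega
        rw [this, pow_succ]; ring
      rw [e1, e2, Module.End.one_apply]
      module
    rw [map_sum (delta Φ (1 + m) - 1)]
    rw [Finset.sum_congr rfl key, Finset.sum_add_distrib]
    abel

theorem expansion_indicator_nonzero (Φ : Type*) [Field Φ] (p : ℕ) [Fact p.Prime]
    [CharP Φ p] (m : ℕ) (hm : 1 ≤ m) :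
    (List.range' 1 m).foldl (fun w j => (delta Φ j - 1) w)
        (Finsupp.single (indicator Φ ∅) (1 : Φ)) =
      ∑ S ∈ (Finset.Icc 1 m).powerset,
        (-1 : Φ) ^ (m - S.card) • Finsupp.single (indicator Φ S) (1 : Φ) ∧
    (List.range' 1 m).foldl (fun w j => (delta Φ j - 1) w)
        (Finsupp.single (indicator Φ ∅) (1 : Φ)) ≠ 0 := by
  refine ⟨fold_eq Φ m, ?_⟩
  rw [fold_eq Φ m]
  intro h
  have h2 := congrFun (congrArg DFunLike.coe h) (indicator Φ (Finset.Icc 1 m))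
  rw [Finsupp.finset_sum_apply] at h2
  simp only [Finsupp.smul_apply, Finsupp.single_apply, Finsupp.coe_zero,
    Pi.zero_apply] at h2
  rw [Finset.sum_eq_single (Finset.Icc 1 m)] at h2
  · simp at h2
  · intro S hS hne
    have : ¬ (indicator Φ S = indicator Φ (Finset.Icc 1 m)) := fun he =>
      hne (indicator_injective Φ he)
    simp [this]
  · simp
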